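/- For all t, τ ≥ 0 the kernel composition identity holds: 4∫₀^{min(t,τ)} G_ε(t−s) G_ε(s−τ) ds = G_ε(t−τ) − G_ε(τ)·exp(−γt/(2ε)). -/

import Mathlib

open MeasureTheory Filter Set

/-- The exponential kernel `G_ε(τ) = (γ/(4ε))·exp(−γ|τ|/(2ε))`. -/
noncomputable def Gker (γ ε τ : ℝ) : ℝ := (γ / (4 * ε)) * Real.exp (-(γ * |τ|) / (2 * ε))

lemma integral_exp_mul_aux (a m : ℝ) (ha : a ≠ 0) :
    ∫ s in (0:ℝ)..m, Real.exp (a * s) = (Real.exp (a * m) - 1) / a := by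
  rw [intervalIntegral.integral_comp_mul_left Real.exp ha]
  simp [integral_exp, smul_eq_mul, div_eq_inv_mul]

lemma final_aux (γ ε : ℝ) (hγ : 0 < γ) (hε : 0 < ε) (A B m' : ℝ)
    (hAB : A + γ / ε * m' = B) :
    4 * ((γ/(4*ε))^2 * Real.exp A * ((Real.exp (γ/ε * m') - 1) / (γ/ε)))
      = γ/(4*ε) * Real.exp B - γ/(4*ε) * Real.exp A := by
  rw [← hAB, Real.exp_add]
  have h1 : γ / ε ≠ 0 := div_ne_zero hγ.ne' hε.ne'
  field_simp

/-- Kernel composition identity: for `t, τ ≥ 0`,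
`4∫₀^{min(t,τ)} G_ε(t−s) G_ε(s−τ) ds = G_ε(t−τ) − G_ε(τ)·exp(−γt/(2ε))`. -/
theorem kernel_composition_identity
    (γ ε : ℝ) (hγ : 0 < γ) (hε : 0 < ε) (t τ : ℝ) (ht : 0 ≤ t) (hτ : 0 ≤ τ) :
    4 * ∫ s in (0 : ℝ)..(min t τ), Gker γ ε (t - s) * Gker γ ε (s - τ)
      = Gker γ ε (t - τ) - Gker γ ε τ * Real.exp (-(γ * t) / (2 * ε)) := by
  set m := min t τ with hm
  have hm0 : 0 ≤ m := le_min ht hτ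
  have hεne : ε ≠ 0 := hε.ne'
  have hγne : γ ≠ 0 := hγ.ne'
  have ha : γ / ε ≠ 0 := div_ne_zero hγne hεne
  have hcong : EqOn (fun s => Gker γ ε (t - s) * Gker γ ε (s - τ))
      (fun s => (γ/(4*ε))^2 * Real.exp (-(γ*(t+τ))/(2*ε)) * Real.exp ((γ/ε) * s))
      (Set.uIcc (0:ℝ) m) := by
    intro s hs
    rw [Set.uIcc_of_le hm0] at hs
    have h1 : |t - s| = t - s := abs_of_nonneg (by
      have := min_le_left t τ; simp only [← hm] at this; linarith [hs.2])
    have h2 : |s - τ| = -(s - τ) := abs_of_nonpos (by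
      have := min_le_right t τ; simp only [← hm] at this; linarith [hs.2])
    simp only [Gker, h1, h2]
    have he : -(γ*(t-s))/(2*ε) + -(γ*(-(s-τ)))/(2*ε)
        = -(γ*(t+τ))/(2*ε) + (γ/ε) * s := by field_simp; ring
    calc (γ/(4*ε)) * Real.exp (-(γ*(t-s))/(2*ε)) * ((γ/(4*ε)) * Real.exp (-(γ*(-(s-τ)))/(2*ε)))
        = (γ/(4*ε))^2 * Real.exp (-(γ*(t-s))/(2*ε) + -(γ*(-(s-τ)))/(2*ε)) := by
          rw [Real.exp_add]; ring
      _ = _ := by rw [he, Real.exp_add]; ring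
  rw [intervalIntegral.integral_congr hcong]
  rw [intervalIntegral.integral_const_mul, integral_exp_mul_aux _ _ ha]
  have hexp : ∀ x y : ℝ, Real.exp x * Real.exp y = Real.exp (x + y) :=
    fun x y => (Real.exp_add x y).symm
  rcases le_total t τ with h | h
  · have hmt : m = t := min_eq_left h
    have habs : |t - τ| = τ - t := by rw [abs_of_nonpos (by linarith)]; ring
    rw [hmt]
    simp only [Gker, habs, abs_of_nonneg hτ, mul_assoc, hexp]
    rw [show -(γ*τ)/(2*ε) + -(γ*t)/(2*ε) = -(γ*(t+τ))/(2*ε) by field_simp; ring,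
        ← mul_assoc]
    linear_combination final_aux γ ε hγ hε (-(γ*(t+τ))/(2*ε)) (-(γ*(τ-t))/(2*ε)) t
      (by field_simp; ring)
  · have hmt : m = τ := min_eq_right h
    have habs : |t - τ| = t - τ := abs_of_nonneg (by linarith)
    rw [hmt]
    simp only [Gker, habs, abs_of_nonneg hτ, mul_assoc, hexp]
    rw [show -(γ*τ)/(2*ε) + -(γ*t)/(2*ε) = -(γ*(t+τ))/(2*ε) by field_simp; ring,
        ← mul_assoc]
    linear_combination final_aux γ ε hγ hε (-(γ*(t+τ))/(2*ε)) (-(γ*(t-τ))/(2*ε)) τ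
      (by field_simp; ring)
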